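/- Let G be a bounded subgroup of GL(2, ℝ) such that every element of G with determinant 1 is a scalar (±I). Then either every element of G has determinant 1 (so G ⊆ {±I}), or there exists A ∈ G with A² = I, det(A) = −1, and G ⊆ {I, −I, A, −A}. -/
import Mathlib


/-- `G` is a bounded subset of the space of 2×2 real matrices. -/
def MatBounded (G : Subgroup (GL (Fin 2) ℝ)) : Prop :=
  ∃ C : ℝ, ∀ A ∈ G, ∀ i j : Fin 2, |(A : Matrix (Fin 2) (Fin 2) ℝ) i j| ≤ C

theorem stmt_17 (G : Subgroup (GL (Fin 2) ℝ)) (hG : MatBounded G)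
    (hscalar : ∀ A ∈ G, Matrix.det (A : Matrix (Fin 2) (Fin 2) ℝ) = 1 →
      (A : Matrix (Fin 2) (Fin 2) ℝ) = 1 ∨ (A : Matrix (Fin 2) (Fin 2) ℝ) = -1) :
    (∀ A ∈ G, Matrix.det (A : Matrix (Fin 2) (Fin 2) ℝ) = 1 ∧
        ((A : Matrix (Fin 2) (Fin 2) ℝ) = 1 ∨ (A : Matrix (Fin 2) (Fin 2) ℝ) = -1)) ∨
      ∃ A ∈ G, (A : Matrix (Fin 2) (Fin 2) ℝ) * (A : Matrix (Fin 2) (Fin 2) ℝ) = 1 ∧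
        Matrix.det (A : Matrix (Fin 2) (Fin 2) ℝ) = -1 ∧
        ∀ B ∈ G, (B : Matrix (Fin 2) (Fin 2) ℝ) = 1 ∨ (B : Matrix (Fin 2) (Fin 2) ℝ) = -1 ∨
          (B : Matrix (Fin 2) (Fin 2) ℝ) = (A : Matrix (Fin 2) (Fin 2) ℝ) ∨
          (B : Matrix (Fin 2) (Fin 2) ℝ) = -(A : Matrix (Fin 2) (Fin 2) ℝ) := by
  classical
  obtain ⟨C, hC⟩ := hG
  -- determinant of any element is bounded
  have hdb : ∀ A ∈ G, |Matrix.det (A : Matrix (Fin 2) (Fin 2) ℝ)| ≤ 2 * C ^ 2 := by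
    intro A hA
    rw [Matrix.det_fin_two]
    have h00 := hC A hA 0 0
    have h01 := hC A hA 0 1
    have h10 := hC A hA 1 0
    have h11 := hC A hA 1 1
    have habs : ∀ i j : Fin 2, 0 ≤ |(A : Matrix (Fin 2) (Fin 2) ℝ) i j| := fun i j => abs_nonneg _
    calc |(A : Matrix (Fin 2) (Fin 2) ℝ) 0 0 * (A : Matrix (Fin 2) (Fin 2) ℝ) 1 1 -
            (A : Matrix (Fin 2) (Fin 2) ℝ) 0 1 * (A : Matrix (Fin 2) (Fin 2) ℝ) 1 0|
        ≤ |(A : Matrix (Fin 2) (Fin 2) ℝ) 0 0 * (A : Matrix (Fin 2) (Fin 2) ℝ) 1 1| +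
            |(A : Matrix (Fin 2) (Fin 2) ℝ) 0 1 * (A : Matrix (Fin 2) (Fin 2) ℝ) 1 0| :=
          abs_sub _ _
      _ ≤ 2 * C ^ 2 := by
          rw [abs_mul, abs_mul]
          nlinarith [habs 0 0, habs 0 1, habs 1 0, habs 1 1]
  -- determinant of any element is ±1
  have hdet : ∀ A ∈ G, Matrix.det (A : Matrix (Fin 2) (Fin 2) ℝ) = 1 ∨
      Matrix.det (A : Matrix (Fin 2) (Fin 2) ℝ) = -1 := by
    intro A hA
    have key : ∀ B ∈ G, |Matrix.det (B : Matrix (Fin 2) (Fin 2) ℝ)| ≤ 1 := by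
      intro B hB
      by_contra hgt
      push_neg at hgt
      obtain ⟨n, hn⟩ := pow_unbounded_of_one_lt (2 * C ^ 2) hgt
      have hBn : B ^ n ∈ G := pow_mem hB n
      have := hdb (B ^ n) hBn
      have hcoe : ((B ^ n : GL (Fin 2) ℝ) : Matrix (Fin 2) (Fin 2) ℝ) =
          ((B : Matrix (Fin 2) (Fin 2) ℝ)) ^ n := Units.val_pow_eq_pow_val B n
      rw [hcoe, Matrix.det_pow] at this
      rw [abs_pow] at this
      linarith
    have h1 := key A hA
    have h2 := key A⁻¹ (inv_mem hA)
    have hmul : Matrix.det (A : Matrix (Fin 2) (Fin 2) ℝ) *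
        Matrix.det ((A⁻¹ : GL (Fin 2) ℝ) : Matrix (Fin 2) (Fin 2) ℝ) = 1 := by
      rw [← Matrix.det_mul]
      have : (A : Matrix (Fin 2) (Fin 2) ℝ) * ((A⁻¹ : GL (Fin 2) ℝ) : Matrix (Fin 2) (Fin 2) ℝ)
          = 1 := by
        rw [← Units.val_mul, mul_inv_cancel]; rfl
      rw [this, Matrix.det_one]
    have habs1 : |Matrix.det (A : Matrix (Fin 2) (Fin 2) ℝ)| = 1 := by
      have := abs_mul (Matrix.det (A : Matrix (Fin 2) (Fin 2) ℝ))
        (Matrix.det ((A⁻¹ : GL (Fin 2) ℝ) : Matrix (Fin 2) (Fin 2) ℝ))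
      rw [hmul, abs_one] at this
      nlinarith [abs_nonneg (Matrix.det (A : Matrix (Fin 2) (Fin 2) ℝ)),
        abs_nonneg (Matrix.det ((A⁻¹ : GL (Fin 2) ℝ) : Matrix (Fin 2) (Fin 2) ℝ))]
    rcases abs_eq (by norm_num : (0:ℝ) ≤ 1) |>.mp habs1 with h | h
    · exact Or.inl h
    · exact Or.inr h
  by_cases hall : ∀ A ∈ G, Matrix.det (A : Matrix (Fin 2) (Fin 2) ℝ) = 1
  · exact Or.inl fun A hA => ⟨hall A hA, hscalar A hA (hall A hA)⟩
  · push_neg at hall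
    obtain ⟨A, hA, hne1⟩ := hall
    have hdA : Matrix.det (A : Matrix (Fin 2) (Fin 2) ℝ) = -1 :=
      (hdet A hA).resolve_left hne1
    set M : Matrix (Fin 2) (Fin 2) ℝ := (A : Matrix (Fin 2) (Fin 2) ℝ) with hM
    have hAA : A * A ∈ G := mul_mem hA hA
    have hcoeAA : ((A * A : GL (Fin 2) ℝ) : Matrix (Fin 2) (Fin 2) ℝ) = M * M :=
      Units.val_mul A A
    have hdetAA : Matrix.det ((A * A : GL (Fin 2) ℝ) : Matrix (Fin 2) (Fin 2) ℝ) = 1 := by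
      rw [hcoeAA, Matrix.det_mul, hdA]; ring
    have hsq : M * M = 1 := by
      rcases hscalar (A * A) hAA hdetAA with h | h
      · rw [hcoeAA] at h; exact h
      · -- impossible: M * M = -1 with det M = -1
        exfalso
        rw [hcoeAA] at h
        have e00 : (M * M) 0 0 = (-1 : Matrix (Fin 2) (Fin 2) ℝ) 0 0 := by rw [h]
        have e11 : (M * M) 1 1 = (-1 : Matrix (Fin 2) (Fin 2) ℝ) 1 1 := by rw [h]
        simp [Matrix.mul_apply, Fin.sum_univ_two, Matrix.neg_apply, Matrix.one_apply] at e00 e11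
        rw [Matrix.det_fin_two] at hdA
        nlinarith [sq_nonneg (M 0 0 + M 1 1)]
    refine Or.inr ⟨A, hA, hsq, hdA, ?_⟩
    intro B hB
    set N : Matrix (Fin 2) (Fin 2) ℝ := (B : Matrix (Fin 2) (Fin 2) ℝ) with hN
    rcases hdet B hB with hdB | hdB
    · rcases hscalar B hB hdB with h | h
      · exact Or.inl h
      · exact Or.inr (Or.inl h)
    · have hBA : B * A ∈ G := mul_mem hB hA
      have hcoeBA : ((B * A : GL (Fin 2) ℝ) : Matrix (Fin 2) (Fin 2) ℝ) = N * M :=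
        Units.val_mul B A
      have hdetBA : Matrix.det ((B * A : GL (Fin 2) ℝ) : Matrix (Fin 2) (Fin 2) ℝ) = 1 := by
        rw [hcoeBA, Matrix.det_mul]
        rw [← hN] at hdB
        rw [hdB, hdA]; ring
      rcases hscalar (B * A) hBA hdetBA with h | h
      · rw [hcoeBA] at h
        have : N = M := by
          calc N = N * (M * M) := by rw [hsq, mul_one]
            _ = (N * M) * M := by rw [mul_assoc]
            _ = M := by rw [h, one_mul]
        exact Or.inr (Or.inr (Or.inl this))
      · rw [hcoeBA] at h
        have : N = -M := by
          calc N = N * (M * M) := by rw [hsq, mul_one]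
            _ = (N * M) * M := by rw [mul_assoc]
            _ = -M := by rw [h]; simp
        exact Or.inr (Or.inr (Or.inr this))
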